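/- The max-plus product of any finite list of n×n tropical elementary Jacobi matrices with real parameters (the empty product being the tropical identity matrix, with 0 on the diagonal and −∞ elsewhere) is a tropical totally nonnegative matrix. -/

import Mathlib

open Finset

/-- Truncated predecessor in `Fin n` (1-indexed entry `i-1`). -/
def fpred {n : ℕ} (j : Fin n) : Fin n :=
  ⟨j.val - 1, Nat.lt_of_le_of_lt (Nat.sub_le _ _) j.isLt⟩

/-- `ψ(W)_{i,j}` is the tropical weight of the uppermost path from source `i`
to target `j` in the canonical planar network `G_n`. -/
def psi (n : ℕ) (W : Matrix (Fin n) (Fin n) ℝ) : Matrix (Fin n) (Fin n) ℝ :=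
  fun i j => if i ≤ j then ∑ t ∈ Finset.Icc i j, W i t else ∑ t ∈ Finset.Icc j i, W t j

/-- The map `φ`, inverse of `ψ`. -/
def phi (n : ℕ) (A : Matrix (Fin n) (Fin n) ℝ) : Matrix (Fin n) (Fin n) ℝ :=
  fun i j =>
    if i = j then A i j
    else if i < j then A i j - A i (fpred j)
    else A i j - A (fpred i) j

/-- Weak trapeze inequalities. -/
def WeakTrapeze (n : ℕ) (W : Matrix (Fin n) (Fin n) ℝ) : Prop :=
  ∀ i : Fin n, 0 < i.val →
    W i (fpred i) + W (fpred i) (fpred i) + W (fpred i) i ≤ W i i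

/-- Strict trapeze inequalities. -/
def StrictTrapeze (n : ℕ) (W : Matrix (Fin n) (Fin n) ℝ) : Prop :=
  ∀ i : Fin n, 0 < i.val →
    W i (fpred i) + W (fpred i) (fpred i) + W (fpred i) i < W i i

/-- Weak parallelogram inequalities. -/
def WeakPara (n : ℕ) (W : Matrix (Fin n) (Fin n) ℝ) : Prop :=
  ∀ i j : Fin n, ∀ _h : j.val + 2 ≤ i.val,
    W i j ≤ W i ⟨j.val + 1, by have := i.isLt; omega⟩ ∧
    W j i ≤ W ⟨j.val + 1, by have := i.isLt; omega⟩ i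

/-- Strict parallelogram inequalities. -/
def StrictPara (n : ℕ) (W : Matrix (Fin n) (Fin n) ℝ) : Prop :=
  ∀ i j : Fin n, ∀ _h : j.val + 2 ≤ i.val,
    W i j < W i ⟨j.val + 1, by have := i.isLt; omega⟩ ∧
    W j i < W ⟨j.val + 1, by have := i.isLt; omega⟩ i

/-- Maximum, over the permutations of sign `ε`, of the tropical weight of the
permutation in the `k × k` matrix `B` (computed in `WithBot ℝ`, the maximum over
the empty set being `⊥ = -∞`). -/
def tropPermSup (k : ℕ) (ε : ℤˣ) (B : Matrix (Fin k) (Fin k) (WithBot ℝ)) : WithBot ℝ :=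
  (Finset.univ.filter fun σ : Equiv.Perm (Fin k) => Equiv.Perm.sign σ = ε).sup
    fun σ => ∑ i, B i (σ i)

/-- Tropical total nonnegativity of a matrix over `ℝ ∪ {-∞}`. -/
def IsTropTN (n : ℕ) (A : Matrix (Fin n) (Fin n) (WithBot ℝ)) : Prop :=
  ∀ (k : ℕ) (r c : Fin k → Fin n), StrictMono r → StrictMono c →
    tropPermSup k (-1) (A.submatrix r c) ≤ tropPermSup k 1 (A.submatrix r c)

/-- Tropical total positivity of a real matrix. -/
def IsTropTP (n : ℕ) (A : Matrix (Fin n) (Fin n) ℝ) : Prop :=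
  ∀ (k : ℕ), 2 ≤ k → ∀ (r c : Fin k → Fin n), StrictMono r → StrictMono c →
    tropPermSup k (-1) ((A.map ((↑) : ℝ → WithBot ℝ)).submatrix r c) <
      tropPermSup k 1 ((A.map ((↑) : ℝ → WithBot ℝ)).submatrix r c)

/-- Max-plus matrix product. -/
def tropMul {l m p : ℕ} (A : Matrix (Fin l) (Fin m) (WithBot ℝ))
    (B : Matrix (Fin m) (Fin p) (WithBot ℝ)) : Matrix (Fin l) (Fin p) (WithBot ℝ) :=
  fun i j => Finset.univ.sup fun k => A i k + B k j

/-- Tropical identity matrix. -/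
def tropId (n : ℕ) : Matrix (Fin n) (Fin n) (WithBot ℝ) :=
  fun i j => if i = j then 0 else ⊥

/-- Tropical elementary Jacobi matrix `x_i(s)` (0-indexed: `s` in position `(i, i+1)`). -/
def xUp (n : ℕ) (i : ℕ) (s : ℝ) : Matrix (Fin n) (Fin n) (WithBot ℝ) :=
  fun a b => if a = b then 0 else if a.val = i ∧ b.val = i + 1 then (s : WithBot ℝ) else ⊥

/-- Tropical elementary Jacobi matrix `x̄_i(s)` (0-indexed: `s` in position `(i+1, i)`). -/
def xLow (n : ℕ) (i : ℕ) (s : ℝ) : Matrix (Fin n) (Fin n) (WithBot ℝ) :=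
  fun a b => if a = b then 0 else if a.val = i + 1 ∧ b.val = i then (s : WithBot ℝ) else ⊥

/-- Tropical elementary Jacobi matrix `x∘_i(s)` (0-indexed diagonal matrix,
`s` in position `(i, i)`). -/
def xDiag (n : ℕ) (i : ℕ) (s : ℝ) : Matrix (Fin n) (Fin n) (WithBot ℝ) :=
  fun a b => if a = b then (if a.val = i then (s : WithBot ℝ) else 0) else ⊥

/-- Entry of `W` looked up with natural-number (0-based) indices. -/
def wnat (n : ℕ) (W : Matrix (Fin n) (Fin n) ℝ) (a b : ℕ) : ℝ :=
  if h : a < n ∧ b < n then W ⟨a, h.1⟩ ⟨b, h.2⟩ else 0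

/-- The left part `L(W)` of the canonical planar network:
`L(W) = ⊙_{k=1}^{n−1} ⊙_{t=1}^{k} x̄_{n−k+t−1}(W_{n−k+t, t})` (1-indexed). -/
def Lmat (n : ℕ) (W : Matrix (Fin n) (Fin n) ℝ) : Matrix (Fin n) (Fin n) (WithBot ℝ) :=
  ((List.range (n - 1)).flatMap fun k => (List.range (k + 1)).map fun t =>
      xLow n (n - k + t - 2) (wnat n W (n - k + t - 1) t)).foldl tropMul (tropId n)

/-- The diagonal part `D(W) = x∘_1(W_{1,1}) ⊙ ⋯ ⊙ x∘_n(W_{n,n})` (1-indexed). -/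
def Dmat (n : ℕ) (W : Matrix (Fin n) (Fin n) ℝ) : Matrix (Fin n) (Fin n) (WithBot ℝ) :=
  ((List.range n).map fun i => xDiag n i (wnat n W i i)).foldl tropMul (tropId n)

/-- The tropical transfer matrix of the canonical totally connected planar
network `G_n` with weight matrix `W`: `T(W) = L(W) ⊙ D(W) ⊙ (L(Wᵀ))ᵀ`. -/
def Tmat (n : ℕ) (W : Matrix (Fin n) (Fin n) ℝ) : Matrix (Fin n) (Fin n) (WithBot ℝ) :=
  tropMul (tropMul (Lmat n W) (Dmat n W)) (Matrix.transpose (Lmat n W.transpose))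

/-- any max-plus product of tropical elementary Jacobi matrices
with real parameters is tropical totally nonnegative. -/
lemma sum_eq_bot' {k : ℕ} (f : Fin k → WithBot ℝ) (i : Fin k) (h : f i = ⊥) :
    ∑ j, f j = ⊥ := by
  classical
  rw [← Finset.add_sum_erase _ f (Finset.mem_univ i), h, WithBot.bot_add]

lemma sup_add_real {α : Type*} [DecidableEq α] (S : Finset α) (f : α → WithBot ℝ) (s : ℝ) :
    S.sup (fun a => f a + (s : WithBot ℝ)) = S.sup f + s := by
  induction S using Finset.induction with
  | empty => simp
  | insert _ _ h ih => rw [Finset.sup_insert, Finset.sup_insert, ih, max_add_add_right]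

lemma sum_split2 {k : ℕ} (f : Fin k → WithBot ℝ) (i₀ i₁ : Fin k) (h : i₀ ≠ i₁) :
    ∑ i, f i = f i₀ + f i₁ + ∑ i ∈ (Finset.univ.erase i₀).erase i₁, f i := by
  classical
  rw [← Finset.add_sum_erase _ f (Finset.mem_univ i₀),
    ← Finset.add_sum_erase _ f (Finset.mem_erase.2 ⟨h.symm, Finset.mem_univ i₁⟩), add_assoc]

lemma sum_if_single {k : ℕ} (g h : Fin k → WithBot ℝ) (σ : Equiv.Perm (Fin k)) (p : Fin k) :
    ∑ i, (if σ i = p then g i else h i)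
      = g (σ⁻¹ p) + ∑ i ∈ Finset.univ.erase (σ⁻¹ p), h i := by
  classical
  rw [← Finset.add_sum_erase _ _ (Finset.mem_univ (σ⁻¹ p))]
  congr 1
  · simp
  · refine Finset.sum_congr rfl fun i hi => ?_
    have : σ i ≠ p := fun hh => (Finset.mem_erase.1 hi).1 (by simp [← hh])
    simp [this]

lemma tropPermSup_colshift {k : ℕ} (ε : ℤˣ) (B : Matrix (Fin k) (Fin k) (WithBot ℝ))
    (p : Fin k) (s : ℝ) :
    tropPermSup k ε (fun a b => if b = p then B a b + s else B a b)
      = tropPermSup k ε B + s := by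
  unfold tropPermSup
  rw [← sup_add_real]
  refine Finset.sup_congr rfl fun σ _ => ?_
  have h1 : ∑ i, (if σ i = p then B i (σ i) + (s:WithBot ℝ) else B i (σ i))
      = (B (σ⁻¹ p) (σ (σ⁻¹ p)) + s) + ∑ i ∈ Finset.univ.erase (σ⁻¹ p), B i (σ i) :=
    sum_if_single _ _ σ p
  have h2 : ∑ i, B i (σ i)
      = (B (σ⁻¹ p) (σ (σ⁻¹ p))) + ∑ i ∈ Finset.univ.erase (σ⁻¹ p), B i (σ i) := by
    have := sum_if_single (fun i => B i (σ i)) (fun i => B i (σ i)) σ p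
    simpa using this
  rw [h1, h2]
  abel

lemma tropPermSup_colmax {k : ℕ} (ε : ℤˣ) (B1 B2 : Matrix (Fin k) (Fin k) (WithBot ℝ))
    (p : Fin k) (hoff : ∀ a b, b ≠ p → B1 a b = B2 a b) :
    tropPermSup k ε (fun a b => if b = p then B1 a b ⊔ B2 a b else B1 a b)
      = tropPermSup k ε B1 ⊔ tropPermSup k ε B2 := by
  unfold tropPermSup
  rw [← Finset.sup_sup]
  refine Finset.sup_congr rfl fun σ _ => ?_
  have h0 : ∑ i, (if σ i = p then B1 i (σ i) ⊔ B2 i (σ i) else B1 i (σ i))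
      = (B1 (σ⁻¹ p) (σ (σ⁻¹ p)) ⊔ B2 (σ⁻¹ p) (σ (σ⁻¹ p)))
        + ∑ i ∈ Finset.univ.erase (σ⁻¹ p), B1 i (σ i) :=
    sum_if_single _ _ σ p
  have h1 : ∑ i, B1 i (σ i)
      = B1 (σ⁻¹ p) (σ (σ⁻¹ p)) + ∑ i ∈ Finset.univ.erase (σ⁻¹ p), B1 i (σ i) := by
    simpa using sum_if_single (fun i => B1 i (σ i)) (fun i => B1 i (σ i)) σ p
  have h2 : ∑ i, B2 i (σ i)
      = B2 (σ⁻¹ p) (σ (σ⁻¹ p)) + ∑ i ∈ Finset.univ.erase (σ⁻¹ p), B1 i (σ i) := by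
    have h2' : ∑ i, B2 i (σ i)
        = B2 (σ⁻¹ p) (σ (σ⁻¹ p)) + ∑ i ∈ Finset.univ.erase (σ⁻¹ p), B2 i (σ i) := by
      simpa using sum_if_single (fun i => B2 i (σ i)) (fun i => B2 i (σ i)) σ p
    rw [h2']
    congr 1
    refine Finset.sum_congr rfl fun i hi => ?_
    exact (hoff i (σ i) fun hh => (Finset.mem_erase.1 hi).1 (by simp [← hh])).symm
  simp only [Pi.sup_apply]
  rw [h0, h1, h2, ← max_add_add_right]

lemma tropPermSup_swap_le {k : ℕ} (ε : ℤˣ) (B : Matrix (Fin k) (Fin k) (WithBot ℝ))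
    (q p : Fin k) (hqp : q ≠ p) (s : ℝ) (hcol : ∀ a, B a p = B a q + s) :
    tropPermSup k ε B ≤ tropPermSup k (-ε) B := by
  apply Finset.sup_le
  intro σ hσ
  have hσs : Equiv.Perm.sign σ = ε := (Finset.mem_filter.1 hσ).2
  have hmem : Equiv.swap q p * σ ∈
      Finset.univ.filter (fun τ : Equiv.Perm (Fin k) => Equiv.Perm.sign τ = -ε) := by
    simp [Equiv.Perm.sign_swap hqp, hσs]
  refine le_trans (le_of_eq ?_) (Finset.le_sup hmem)
  have hne : σ⁻¹ q ≠ σ⁻¹ p := fun h => hqp (by simpa using congrArg σ h)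
  rw [sum_split2 (fun i => B i (σ i)) _ _ hne,
      sum_split2 (fun i => B i ((Equiv.swap q p * σ) i)) _ _ hne]
  have e0 : σ (σ⁻¹ q) = q := Equiv.apply_symm_apply σ q
  have e1 : σ (σ⁻¹ p) = p := Equiv.apply_symm_apply σ p
  have f0 : (Equiv.swap q p * σ) (σ⁻¹ q) = p := by
    simp [Equiv.Perm.mul_apply, e0]
  have f1 : (Equiv.swap q p * σ) (σ⁻¹ p) = q := by
    simp [Equiv.Perm.mul_apply, e1]
  have hrest : ∀ i ∈ (Finset.univ.erase (σ⁻¹ q)).erase (σ⁻¹ p),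
      B i (σ i) = B i ((Equiv.swap q p * σ) i) := by
    intro i hi
    have h1 : σ i ≠ q := fun h => (Finset.mem_erase.1 (Finset.mem_erase.1 hi).2).1
      (by simp [← h])
    have h2 : σ i ≠ p := fun h => (Finset.mem_erase.1 hi).1 (by simp [← h])
    rw [Equiv.Perm.mul_apply, Equiv.swap_apply_of_ne_of_ne h1 h2]
  rw [Finset.sum_congr rfl hrest, e0, e1, f0, f1, hcol (σ⁻¹ q), hcol (σ⁻¹ p)]
  abel


lemma tropId_TN (n : ℕ) : IsTropTN n (tropId n) := by
  intro k r c hr hc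
  have hbot : tropPermSup k (-1) ((tropId n).submatrix r c) = ⊥ := by
    refine le_antisymm (Finset.sup_le fun σ hσ => ?_) bot_le
    have hσs : Equiv.Perm.sign σ = -1 := (Finset.mem_filter.1 hσ).2
    -- show some entry is ⊥
    by_cases hall : ∀ i, r i = c (σ i)
    · -- then σ is an order iso, hence id, contradiction with sign
      have hmono : StrictMono σ := by
        intro a b hab
        have : c (σ a) < c (σ b) := by rw [← hall a, ← hall b]; exact hr hab
        exact hc.lt_iff_lt.1 this
      have : (σ : Equiv.Perm (Fin k)) = 1 := by
        let e : Fin k ≃o Fin k :=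
          { toEquiv := σ, map_rel_iff' := by intro a b; exact hmono.le_iff_le }
        have he : e = OrderIso.refl (Fin k) := Subsingleton.elim _ _
        refine Equiv.ext fun i => ?_
        have h := congrArg (fun f : Fin k ≃o Fin k => f i) he
        simpa [e] using h
      rw [this] at hσs
      simp at hσs
    · push_neg at hall
      obtain ⟨i, hi⟩ := hall
      have : (tropId n).submatrix r c i (σ i) = ⊥ := by
        simp [tropId, Matrix.submatrix, hi]
      exact le_of_eq (sum_eq_bot' _ i this)
  rw [hbot]; exact bot_le

lemma colop_TN {n : ℕ} (A : Matrix (Fin n) (Fin n) (WithBot ℝ)) (hA : IsTropTN n A)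
    (j₁ j₂ : Fin n) (hadj : j₁.val + 1 = j₂.val ∨ j₂.val + 1 = j₁.val) (s : ℝ) :
    IsTropTN n (fun a b => if b = j₂ then A a j₂ ⊔ (A a j₁ + s) else A a b) := by
  have hj : j₁ ≠ j₂ := by
    intro h; rcases hadj with h' | h' <;> (rw [h] at h'; omega)
  intro k r c hr hc
  by_cases hp : ∃ p, c p = j₂
  · obtain ⟨p, hp⟩ := hp
    set B1 : Matrix (Fin k) (Fin k) (WithBot ℝ) := A.submatrix r c with hB1
    set B2 : Matrix (Fin k) (Fin k) (WithBot ℝ) :=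
      fun a b => if b = p then A (r a) j₁ + s else A (r a) (c b) with hB2
    have hCeq : Matrix.submatrix
        (fun a b => if b = j₂ then A a j₂ ⊔ (A a j₁ + s) else A a b) r c
        = fun a b => if b = p then B1 a b ⊔ B2 a b else B1 a b := by
      funext a b
      by_cases hb : b = p
      · subst hb
        simp [Matrix.submatrix, hp, hB1, hB2]
      · have hcb : c b ≠ j₂ := fun h => hb (hc.injective (h.trans hp.symm))
        simp [Matrix.submatrix, hcb, hb, hB1]
    have hoff : ∀ a b, b ≠ p → B1 a b = B2 a b := by
      intro a b hb; simp [hB1, hB2, hb, Matrix.submatrix]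
    rw [hCeq, tropPermSup_colmax _ _ _ _ hoff, tropPermSup_colmax _ _ _ _ hoff]
    refine sup_le_sup (hA k r c hr hc) ?_
    by_cases hq : ∃ q, c q = j₁
    · obtain ⟨q, hq⟩ := hq
      have hqp : q ≠ p := fun h => hj (by rw [← hq, ← hp, h])
      have hcol : ∀ a, B2 a p = B2 a q + (s : WithBot ℝ) := by
        intro a; simp [hB2, hqp, hq]
      simpa using tropPermSup_swap_le (-1) B2 q p hqp s hcol
    · push_neg at hq
      set c' : Fin k → Fin n := Function.update c p j₁ with hc'
      have hc'mono : StrictMono c' := by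
        intro a b hab
        rcases eq_or_ne a p with ha | ha <;> rcases eq_or_ne b p with hb | hb
        · exact absurd (ha.trans hb.symm) (ne_of_lt hab)
        · subst ha
          simp only [hc', Function.update_self, Function.update_of_ne hb]
          have h1 : j₂ < c b := by rw [← hp]; exact hc hab
          have h1' : j₂.val < (c b).val := h1
          have h3 : (c b).val ≠ j₁.val := fun hh => hq b (Fin.ext hh)
          exact Fin.lt_iff_val_lt_val.2 (by omega)
        · subst hb
          simp only [hc', Function.update_self, Function.update_of_ne ha]
          have h1 : c a < j₂ := by rw [← hp]; exact hc hab
          have h1' : (c a).val < j₂.val := h1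
          have h3 : (c a).val ≠ j₁.val := fun hh => hq a (Fin.ext hh)
          exact Fin.lt_iff_val_lt_val.2 (by omega)
        · simp only [hc', Function.update_of_ne ha, Function.update_of_ne hb]
          exact hc hab
      have hB2eq : B2 = fun a b =>
          if b = p then (A.submatrix r c') a b + (s : WithBot ℝ) else (A.submatrix r c') a b := by
        funext a b
        by_cases hb : b = p
        · subst hb; simp [hB2, Matrix.submatrix, hc', Function.update_self]
        · simp [hB2, Matrix.submatrix, hc', Function.update_of_ne hb, hb]
      rw [hB2eq, tropPermSup_colshift, tropPermSup_colshift]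
      exact add_le_add_left (hA k r c' hr hc'mono) _
  · push_neg at hp
    have hCeq : Matrix.submatrix
        (fun a b => if b = j₂ then A a j₂ ⊔ (A a j₁ + s) else A a b) r c
        = A.submatrix r c := by
      funext a b
      simp [Matrix.submatrix, hp b]
    rw [hCeq]
    exact hA k r c hr hc

lemma colshift_TN {n : ℕ} (A : Matrix (Fin n) (Fin n) (WithBot ℝ)) (hA : IsTropTN n A)
    (j : Fin n) (s : ℝ) :
    IsTropTN n (fun a b => if b = j then A a j + s else A a b) := by
  intro k r c hr hc
  by_cases hp : ∃ p, c p = j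
  · obtain ⟨p, hp⟩ := hp
    have hCeq : Matrix.submatrix (fun a b => if b = j then A a j + s else A a b) r c
        = fun a b => if b = p then (A.submatrix r c) a b + (s:WithBot ℝ)
            else (A.submatrix r c) a b := by
      funext a b
      by_cases hb : b = p
      · subst hb; simp [Matrix.submatrix, hp]
      · have : c b ≠ j := fun h => hb (hc.injective (h.trans hp.symm))
        simp [Matrix.submatrix, this, hb]
    rw [hCeq, tropPermSup_colshift, tropPermSup_colshift]
    exact add_le_add_left (hA k r c hr hc) _
  · push_neg at hp
    have hCeq : Matrix.submatrix (fun a b => if b = j then A a j + s else A a b) r c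
        = A.submatrix r c := by
      funext a b; simp [Matrix.submatrix, hp b]
    rw [hCeq]
    exact hA k r c hr hc


lemma tropMul_xUp {n : ℕ} (A : Matrix (Fin n) (Fin n) (WithBot ℝ)) (i : ℕ)
    (hi : i + 1 < n) (s : ℝ) :
    tropMul A (xUp n i s)
      = fun a b => if b = (⟨i + 1, hi⟩ : Fin n) then
            A a ⟨i + 1, hi⟩ ⊔ (A a ⟨i, Nat.lt_of_succ_lt hi⟩ + s)
          else A a b := by
  have hne : (⟨i, Nat.lt_of_succ_lt hi⟩ : Fin n) ≠ (⟨i + 1, hi⟩ : Fin n) := by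
    simp [Fin.ext_iff]
  funext a b
  show (Finset.univ.sup fun c => A a c + xUp n i s c b) = _
  by_cases hb : b = (⟨i + 1, hi⟩ : Fin n)
  · subst hb
    rw [if_pos rfl]
    apply le_antisymm
    · apply Finset.sup_le
      intro c _
      rcases eq_or_ne c (⟨i + 1, hi⟩ : Fin n) with hc | hc
      · subst hc
        have h0 : xUp n i s ⟨i + 1, hi⟩ ⟨i + 1, hi⟩ = 0 := if_pos rfl
        rw [h0, add_zero]
        exact le_sup_left
      · rcases eq_or_ne c (⟨i, Nat.lt_of_succ_lt hi⟩ : Fin n) with hc2 | hc2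
        · subst hc2
          have h0 : xUp n i s ⟨i, Nat.lt_of_succ_lt hi⟩ ⟨i + 1, hi⟩ = (s : WithBot ℝ) := by
            rw [xUp, if_neg hne, if_pos ⟨rfl, rfl⟩]
          rw [h0]
          exact le_sup_right
        · have h0 : xUp n i s c ⟨i + 1, hi⟩ = ⊥ := by
            rw [xUp, if_neg hc, if_neg]
            rintro ⟨h1, -⟩
            exact hc2 (Fin.ext h1)
          rw [h0, WithBot.add_bot]
          exact bot_le
    · apply sup_le
      · have h0 : xUp n i s ⟨i + 1, hi⟩ ⟨i + 1, hi⟩ = 0 := if_pos rfl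
        refine le_trans (le_of_eq ?_) (Finset.le_sup (Finset.mem_univ (⟨i + 1, hi⟩ : Fin n)))
        rw [h0, add_zero]
      · have h0 : xUp n i s ⟨i, Nat.lt_of_succ_lt hi⟩ ⟨i + 1, hi⟩ = (s : WithBot ℝ) := by
          rw [xUp, if_neg hne, if_pos ⟨rfl, rfl⟩]
        refine le_trans (le_of_eq ?_) (Finset.le_sup (Finset.mem_univ (⟨i, Nat.lt_of_succ_lt hi⟩ : Fin n)))
        rw [h0]
  · rw [if_neg hb]
    apply le_antisymm
    · apply Finset.sup_le
      intro c _
      rcases eq_or_ne c b with hc | hc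
      · subst hc
        have h0 : xUp n i s c c = 0 := if_pos rfl
        rw [h0, add_zero]
      · have h0 : xUp n i s c b = ⊥ := by
          rw [xUp, if_neg hc, if_neg]
          rintro ⟨-, h2⟩
          exact hb (Fin.ext h2)
        rw [h0, WithBot.add_bot]
        exact bot_le
    · have h0 : xUp n i s b b = 0 := if_pos rfl
      refine le_trans (le_of_eq ?_) (Finset.le_sup (Finset.mem_univ b))
      rw [h0, add_zero]


lemma tropMul_xLow {n : ℕ} (A : Matrix (Fin n) (Fin n) (WithBot ℝ)) (i : ℕ)
    (hi : i + 1 < n) (s : ℝ) :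
    tropMul A (xLow n i s)
      = fun a b => if b = (⟨i, Nat.lt_of_succ_lt hi⟩ : Fin n) then
            A a ⟨i, Nat.lt_of_succ_lt hi⟩ ⊔ (A a ⟨i + 1, hi⟩ + s)
          else A a b := by
  have hne : (⟨i + 1, hi⟩ : Fin n) ≠ (⟨i, Nat.lt_of_succ_lt hi⟩ : Fin n) := by
    simp [Fin.ext_iff]
  funext a b
  show (Finset.univ.sup fun c => A a c + xLow n i s c b) = _
  by_cases hb : b = (⟨i, Nat.lt_of_succ_lt hi⟩ : Fin n)
  · subst hb
    rw [if_pos rfl]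
    apply le_antisymm
    · apply Finset.sup_le
      intro c _
      rcases eq_or_ne c (⟨i, Nat.lt_of_succ_lt hi⟩ : Fin n) with hc | hc
      · subst hc
        have h0 : xLow n i s ⟨i, Nat.lt_of_succ_lt hi⟩ ⟨i, Nat.lt_of_succ_lt hi⟩ = 0 := if_pos rfl
        rw [h0, add_zero]
        exact le_sup_left
      · rcases eq_or_ne c (⟨i + 1, hi⟩ : Fin n) with hc2 | hc2
        · subst hc2
          have h0 : xLow n i s ⟨i + 1, hi⟩ ⟨i, Nat.lt_of_succ_lt hi⟩ = (s : WithBot ℝ) := by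
            rw [xLow, if_neg hne, if_pos ⟨rfl, rfl⟩]
          rw [h0]
          exact le_sup_right
        · have h0 : xLow n i s c ⟨i, Nat.lt_of_succ_lt hi⟩ = ⊥ := by
            rw [xLow, if_neg hc, if_neg]
            rintro ⟨h1, -⟩
            exact hc2 (Fin.ext h1)
          rw [h0, WithBot.add_bot]
          exact bot_le
    · apply sup_le
      · have h0 : xLow n i s (⟨i, Nat.lt_of_succ_lt hi⟩ : Fin n) ⟨i, Nat.lt_of_succ_lt hi⟩ = 0 := if_pos rfl
        refine le_trans (le_of_eq ?_) (Finset.le_sup (Finset.mem_univ (⟨i, Nat.lt_of_succ_lt hi⟩ : Fin n)))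
        rw [h0, add_zero]
      · have h0 : xLow n i s ⟨i + 1, hi⟩ ⟨i, Nat.lt_of_succ_lt hi⟩ = (s : WithBot ℝ) := by
          rw [xLow, if_neg hne, if_pos ⟨rfl, rfl⟩]
        refine le_trans (le_of_eq ?_) (Finset.le_sup (Finset.mem_univ (⟨i + 1, hi⟩ : Fin n)))
        rw [h0]
  · rw [if_neg hb]
    apply le_antisymm
    · apply Finset.sup_le
      intro c _
      rcases eq_or_ne c b with hc | hc
      · subst hc
        have h0 : xLow n i s c c = 0 := if_pos rfl
        rw [h0, add_zero]
      · have h0 : xLow n i s c b = ⊥ := by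
          rw [xLow, if_neg hc, if_neg]
          rintro ⟨-, h2⟩
          exact hb (Fin.ext h2)
        rw [h0, WithBot.add_bot]
        exact bot_le
    · have h0 : xLow n i s b b = 0 := if_pos rfl
      refine le_trans (le_of_eq ?_) (Finset.le_sup (Finset.mem_univ b))
      rw [h0, add_zero]

lemma tropMul_xDiag {n : ℕ} (A : Matrix (Fin n) (Fin n) (WithBot ℝ)) (i : ℕ)
    (hi : i < n) (s : ℝ) :
    tropMul A (xDiag n i s)
      = fun a b => if b = (⟨i, hi⟩ : Fin n) then A a ⟨i, hi⟩ + s else A a b := by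
  funext a b
  show (Finset.univ.sup fun c => A a c + xDiag n i s c b) = _
  have hd : xDiag n i s b b = if b.val = i then (s : WithBot ℝ) else 0 := if_pos rfl
  have hsup : (Finset.univ.sup fun c => A a c + xDiag n i s c b)
      = A a b + xDiag n i s b b := by
    apply le_antisymm
    · apply Finset.sup_le
      intro c _
      rcases eq_or_ne c b with hc | hc
      · subst hc; exact le_rfl
      · have h0 : xDiag n i s c b = ⊥ := if_neg hc
        rw [h0, WithBot.add_bot]
        exact bot_le
    · exact Finset.le_sup (f := fun c => A a c + xDiag n i s c b) (Finset.mem_univ b)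
  rw [hsup, hd]
  by_cases hb : b = (⟨i, hi⟩ : Fin n)
  · subst hb
    rw [if_pos rfl, if_pos rfl]
  · rw [if_neg hb, if_neg (fun hh : b.val = i => hb (Fin.ext hh)), add_zero]


set_option maxHeartbeats 1000000 in
theorem jacobi_product_TN (n : ℕ) (L : List (Matrix (Fin n) (Fin n) (WithBot ℝ)))
    (hL : ∀ M ∈ L, ∃ s : ℝ,
      (∃ i : ℕ, i + 1 < n ∧ (M = xUp n i s ∨ M = xLow n i s)) ∨
      (∃ i : ℕ, i < n ∧ M = xDiag n i s)) :
    IsTropTN n (L.foldl tropMul (tropId n)) := by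
  induction L using List.reverseRecOn with
  | nil => exact tropId_TN n
  | append_singleton L' M ih =>
    rw [List.foldl_append, List.foldl_cons, List.foldl_nil]
    have hA : IsTropTN n (L'.foldl tropMul (tropId n)) :=
      ih fun M' hM' => hL M' (List.mem_append_left _ hM')
    obtain ⟨s, h⟩ := hL M (List.mem_append_right _ (List.mem_singleton_self M))
    rcases h with ⟨i, hi, hM | hM⟩ | ⟨i, hi, hM⟩ <;> subst hM
    · rw [tropMul_xUp _ i hi s]
      exact colop_TN _ hA ⟨i, Nat.lt_of_succ_lt hi⟩ ⟨i + 1, hi⟩ (Or.inl rfl) s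
    · rw [tropMul_xLow _ i hi s]
      exact colop_TN _ hA ⟨i + 1, hi⟩ ⟨i, Nat.lt_of_succ_lt hi⟩ (Or.inr rfl) s
    · rw [tropMul_xDiag _ i hi s]
      exact colshift_TN _ hA ⟨i, hi⟩ s
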